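/- Let (G, prec) be a simple preference system. Every vertex of the fractional stable matching polytope FSM(G, prec) is half-integral, i.e., all its coordinates lie in {0, 1/2, 1}. -/

import Mathlib

attribute [local instance] Classical.propDecidable

/-- Edge `e` is incident to vertex `v` (multigraph given by endpoint maps `fst`, `snd`). -/
def Incid {V E : Type} (fst snd : E → V) (e : E) (v : V) : Prop :=
  fst e = v ∨ snd e = v

/-- Edge `e` joins the vertices `u` and `w`. -/
def Joins {V E : Type} (fst snd : E → V) (e : E) (u w : V) : Prop :=
  (fst e = u ∧ snd e = w) ∨ (fst e = w ∧ snd e = u)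

/-- In the preference system `(G, prec)`, edge `f` dominates edge `e`:
they share an endpoint `v` and `v` prefers `f` to `e`. -/
def Dominates {V E : Type} (fst snd : E → V) (prec : V → E → E → Prop) (f e : E) : Prop :=
  ∃ v, Incid fst snd e v ∧ Incid fst snd f v ∧ prec v f e

/-- `prec` is a preference system: for each vertex `v`, `prec v` is a strict linear order
on the set of edges incident to `v`. -/
def IsPrefOrder {V E : Type} (fst snd : E → V) (prec : V → E → E → Prop) : Prop :=
  (∀ v e, ¬ prec v e e) ∧
  (∀ v e f g, prec v e f → prec v f g → prec v e g) ∧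
  (∀ v e f, Incid fst snd e v → Incid fst snd f v → e ≠ f → prec v e f ∨ prec v f e)

/-- The graph `(V, E)` is simple: no loops and no parallel edges. -/
def SimpleG {V E : Type} (fst snd : E → V) : Prop :=
  (∀ e, fst e ≠ snd e) ∧
  (∀ e f, e ≠ f → ¬ ((fst e = fst f ∧ snd e = snd f) ∨ (fst e = snd f ∧ snd e = fst f)))

/-- The fractional stable matching polytope `FSM(G, prec)`:
`x ≥ 0`, `x(δ(v)) ≤ 1` for every vertex `v`, and `x(φ(e)) ≥ 1` for every edge `e`,
where `φ(e)` consists of `e` together with all edges dominating `e`. -/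
def FSMset {V E : Type} [Fintype V] [Fintype E] (fst snd : E → V)
    (prec : V → E → E → Prop) : Set (E → ℝ) :=
  {x | (∀ e, 0 ≤ x e) ∧
       (∀ v, ∑ e ∈ Finset.univ.filter (fun e => Incid fst snd e v), x e ≤ 1) ∧
       (∀ e, x e + ∑ f ∈ Finset.univ.filter
          (fun f => f ≠ e ∧ Dominates fst snd prec f e), x f ≥ 1)}

/-- `M` is a stable matching of the preference system: a matching such that every edge is
in `M` or dominated by an edge of `M`. -/
def IsStableMatching {V E : Type} (fst snd : E → V) (prec : V → E → E → Prop)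
    (M : Finset E) : Prop :=
  (∀ e ∈ M, ∀ f ∈ M, e ≠ f → ∀ v, ¬ (Incid fst snd e v ∧ Incid fst snd f v)) ∧
  (∀ e, e ∈ M ∨ ∃ f ∈ M, Dominates fst snd prec f e)

/-- The set of characteristic vectors of stable matchings. -/
def SMvecs {V E : Type} (fst snd : E → V) (prec : V → E → E → Prop) : Set (E → ℝ) :=
  {x | ∃ M : Finset E, IsStableMatching fst snd prec M ∧
        x = fun e => if e ∈ M then (1 : ℝ) else 0}

/-- The preference system admits no odd cycle with cyclic preferences. -/
def NoOddCyclicCycle {V E : Type} (fst snd : E → V) (prec : V → E → E → Prop) : Prop :=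
  ∀ n : ℕ, Odd n → ∀ (c : ZMod n → V) (g : ZMod n → E),
    Function.Injective c →
    (∀ i, Joins fst snd (g i) (c i) (c (i + 1))) →
    ¬ ((∀ i, prec (c (i + 1)) (g i) (g (i + 1))) ∨
       (∀ i, prec (c (i + 1)) (g (i + 1)) (g i)))

set_option linter.unusedSectionVars false
set_option linter.unusedVariables false

namespace AR

open Finset

variable {V E : Type} [Fintype V] [Fintype E]

/-- Edges incident to `v`. -/
noncomputable def incF (fst snd : E → V) (v : V) : Finset E :=
  Finset.univ.filter (fun e => Incid fst snd e v)

/-- Edges strictly dominating `g`. -/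
noncomputable def DomF (fst snd : E → V) (prec : V → E → E → Prop) (g : E) : Finset E :=
  Finset.univ.filter (fun f => f ≠ g ∧ Dominates fst snd prec f g)

/-- Positive-valued edges at `w` that dominate `g` at `w`. -/
noncomputable def PsideF (fst snd : E → V) (prec : V → E → E → Prop) (x : E → ℝ) (w : V) (g : E) :
    Finset E :=
  Finset.univ.filter
    (fun f => Incid fst snd f w ∧ f ≠ g ∧ prec w f g ∧ 0 < x f)

/-- `e` is the best positive edge at `v`. -/
def BstP (fst snd : E → V) (prec : V → E → E → Prop) (x : E → ℝ) (v : V) (e : E) : Prop :=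
  Incid fst snd e v ∧ 0 < x e ∧
    ∀ f, Incid fst snd f v → 0 < x f → f ≠ e → prec v e f

/-- `e` is the worst positive edge at `v`. -/
def WstP (fst snd : E → V) (prec : V → E → E → Prop) (x : E → ℝ) (v : V) (e : E) : Prop :=
  Incid fst snd e v ∧ 0 < x e ∧
    ∀ f, Incid fst snd f v → 0 < x f → f ≠ e → prec v f e

/-- The canonical associated half-integral point. -/
noncomputable def rfun (fst snd : E → V) (prec : V → E → E → Prop) (x : E → ℝ) : E → ℝ :=
  fun e =>
    if 0 < x e ∧ x e < 1 then
      (if BstP fst snd prec x (fst e) e ∨ BstP fst snd prec x (snd e) e then 1/2 else 0)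
    else x e

/-- The other endpoint. -/
noncomputable def othV (fst snd : E → V) (e : E) (v : V) : V :=
  if fst e = v then snd e else fst e

/-- Vertices with a fractional incident edge. -/
noncomputable def VFs (fst snd : E → V) (x : E → ℝ) : Finset V :=
  Finset.univ.filter (fun v => ∃ e, Incid fst snd e v ∧ 0 < x e ∧ x e < 1)

section Main

variable {fst snd : E → V} {prec : V → E → E → Prop} {x : E → ℝ}

lemma transP (hord : IsPrefOrder fst snd prec) {v : V} {a b c : E} :
    prec v a b → prec v b c → prec v a c := hord.2.1 v a b c

lemma asymP (hord : IsPrefOrder fst snd prec) {v : V} {a b : E}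
    (h1 : prec v a b) (h2 : prec v b a) : False :=
  hord.1 v a (hord.2.1 v a b a h1 h2)

lemma othV_incid (e : E) (v : V) : Incid fst snd e (othV fst snd e v) := by
  by_cases h' : fst e = v
  · rw [othV, if_pos h']; exact Or.inr rfl
  · rw [othV, if_neg h']; exact Or.inl rfl

lemma othV_ne (hsimple : SimpleG fst snd) {e : E} {v : V} (h : Incid fst snd e v) :
    othV fst snd e v ≠ v := by
  by_cases h' : fst e = v
  · rw [othV, if_pos h']
    intro hs; exact hsimple.1 e (h'.trans hs.symm)
  · rw [othV, if_neg h']; exact h'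

lemma incid_cases {e : E} {v w : V} (hv : Incid fst snd e v) (hw : Incid fst snd e w) :
    w = v ∨ w = othV fst snd e v := by
  by_cases h' : fst e = v
  · rcases hw with h2 | h2
    · left; rw [← h2, h']
    · right; rw [othV, if_pos h', ← h2]
  · have hsv : snd e = v := by
      rcases hv with h2 | h2
      · exact absurd h2 h'
      · exact h2
    rcases hw with h2 | h2
    · right; rw [othV, if_neg h', ← h2]
    · left; rw [← h2, hsv]

lemma othV_othV (hsimple : SimpleG fst snd) {e : E} {v : V} (hv : Incid fst snd e v) :
    othV fst snd e (othV fst snd e v) = v := by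
  rcases incid_cases (othV_incid e v) hv with h | h
  · exact absurd h.symm (othV_ne hsimple hv)
  · exact h.symm

lemma mem_incF {e : E} {v : V} : e ∈ incF fst snd v ↔ Incid fst snd e v := by
  simp [incF]

lemma VFs_mem {v : V} {e : E} (hinc : Incid fst snd e v) (hfr : 0 < x e ∧ x e < 1) :
    v ∈ VFs fst snd x :=
  Finset.mem_filter.mpr ⟨Finset.mem_univ _, e, hinc, hfr⟩

lemma VFs_frac {v : V} (hv : v ∈ VFs fst snd x) :
    ∃ e, Incid fst snd e v ∧ 0 < x e ∧ x e < 1 :=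
  (Finset.mem_filter.mp hv).2

lemma x_le_one (h0 : ∀ e, 0 ≤ x e) (hdeg : ∀ v, ∑ e ∈ incF fst snd v, x e ≤ 1) (e : E) :
    x e ≤ 1 := by
  refine le_trans (Finset.single_le_sum (fun f _ => h0 f) ?_) (hdeg (fst e))
  exact mem_incF.mpr (Or.inl rfl)

lemma onekills (h0 : ∀ e, 0 ≤ x e) (hdeg : ∀ v, ∑ e ∈ incF fst snd v, x e ≤ 1)
    {v : V} {e f : E} (he : Incid fst snd e v) (hf : Incid fst snd f v)
    (hef : e ≠ f) (hxe : x e = 1) : ¬ 0 < x f := by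
  intro hpos
  have hsub : ({e, f} : Finset E) ⊆ incF fst snd v := by
    intro g hg
    rcases Finset.mem_insert.mp hg with rfl | hg
    · exact mem_incF.mpr he
    · rw [Finset.mem_singleton.mp hg]; exact mem_incF.mpr hf
  have h1 := Finset.sum_le_sum_of_subset_of_nonneg hsub (fun i _ _ => h0 i)
  rw [Finset.sum_pair hef] at h1
  have h2 := hdeg v
  linarith

lemma maxExists (hord : IsPrefOrder fst snd prec) (v : V) (s : Finset E)
    (hne : s.Nonempty) (hinc : ∀ e ∈ s, Incid fst snd e v) :
    ∃ m ∈ s, ∀ f ∈ s, f ≠ m → prec v m f := by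
  classical
  induction s using Finset.induction_on with
  | empty => exact absurd hne (by simp)
  | @insert a s ha ih =>
    by_cases hs : s.Nonempty
    · obtain ⟨m, hm, hmax⟩ := ih hs (fun e he => hinc e (Finset.mem_insert_of_mem he))
      have ham : a ≠ m := fun h => ha (h ▸ hm)
      rcases hord.2.2 v a m (hinc a (Finset.mem_insert_self _ _))
        (hinc m (Finset.mem_insert_of_mem hm)) ham with hp | hp
      · refine ⟨a, Finset.mem_insert_self _ _, ?_⟩
        intro f hf hfa
        rcases Finset.mem_insert.mp hf with rfl | hf
        · exact absurd rfl hfa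
        · rcases eq_or_ne f m with rfl | hfm
          · exact hp
          · exact hord.2.1 v a m f hp (hmax f hf hfm)
      · refine ⟨m, Finset.mem_insert_of_mem hm, ?_⟩
        intro f hf hfm
        rcases Finset.mem_insert.mp hf with rfl | hf
        · exact hp
        · exact hmax f hf hfm
    · rw [Finset.not_nonempty_iff_eq_empty] at hs
      subst hs
      refine ⟨a, Finset.mem_insert_self _ _, ?_⟩
      intro f hf hfa
      rcases Finset.mem_insert.mp hf with rfl | hf
      · exact absurd rfl hfa
      · exact absurd hf (by simp)

lemma noOneAt (h0 : ∀ e, 0 ≤ x e) (hdeg : ∀ v, ∑ e ∈ incF fst snd v, x e ≤ 1)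
    {v : V} {f : E} (hv : v ∈ VFs fst snd x) (hf : Incid fst snd f v)
    (hpos : 0 < x f) : x f < 1 := by
  obtain ⟨e0, he0, hfr⟩ := VFs_frac hv
  by_contra hge
  have hxf : x f = 1 := le_antisymm (x_le_one h0 hdeg f) (not_lt.mp hge)
  rcases eq_or_ne f e0 with rfl | hne
  · rw [hxf] at hfr; exact absurd hfr.2 (by norm_num)
  · exact onekills h0 hdeg hf he0 hne hxf hfr.1

lemma bestExists (hord : IsPrefOrder fst snd prec) (h0 : ∀ e, 0 ≤ x e)
    (hdeg : ∀ v, ∑ e ∈ incF fst snd v, x e ≤ 1) {v : V} (hv : v ∈ VFs fst snd x) :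
    ∃ e, BstP fst snd prec x v e ∧ (0 < x e ∧ x e < 1) := by
  obtain ⟨e0, he0, hfr⟩ := VFs_frac hv
  have hne : ((incF fst snd v).filter (fun e => 0 < x e)).Nonempty :=
    ⟨e0, Finset.mem_filter.mpr ⟨mem_incF.mpr he0, hfr.1⟩⟩
  obtain ⟨m, hm, hmax⟩ := maxExists hord v _ hne
    (fun e he => mem_incF.mp (Finset.mem_filter.mp he).1)
  obtain ⟨hmI, hmp⟩ := Finset.mem_filter.mp hm
  have hB : BstP fst snd prec x v m :=
    ⟨mem_incF.mp hmI, hmp, fun f hfv hfp hfne =>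
      hmax f (Finset.mem_filter.mpr ⟨mem_incF.mpr hfv, hfp⟩) hfne⟩
  exact ⟨m, hB, hmp, noOneAt h0 hdeg hv (mem_incF.mp hmI) hmp⟩

lemma BstP_unique (hord : IsPrefOrder fst snd prec) {v : V} {e e' : E}
    (h : BstP fst snd prec x v e) (h' : BstP fst snd prec x v e') : e = e' := by
  by_contra hne
  exact asymP hord (h.2.2 e' h'.1 h'.2.1 (Ne.symm hne)) (h'.2.2 e h.1 h.2.1 hne)

lemma WstP_unique (hord : IsPrefOrder fst snd prec) {v : V} {e e' : E}
    (h : WstP fst snd prec x v e) (h' : WstP fst snd prec x v e') : e = e' := by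
  by_contra hne
  exact asymP hord (h'.2.2 e h.1 h.2.1 hne) (h.2.2 e' h'.1 h'.2.1 (Ne.symm hne))

/-- The fundamental consequence of the stability constraint of a best edge :
 the other endpoint is degree-tight and the edge is worst there. -/
lemma L2 (hord : IsPrefOrder fst snd prec) (hsimple : SimpleG fst snd)
    (h0 : ∀ e, 0 ≤ x e) (hdeg : ∀ v, ∑ e ∈ incF fst snd v, x e ≤ 1)
    (hstab : ∀ g, 1 ≤ x g + ∑ f ∈ DomF fst snd prec g, x f)
    {u : V} {e : E} (hb : BstP fst snd prec x u e) :
    (∑ f ∈ incF fst snd (othV fst snd e u), x f = 1) ∧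
    (∀ f, Incid fst snd f (othV fst snd e u) → 0 < x f → f ≠ e →
      prec (othV fst snd e u) f e) := by
  classical
  set z := othV fst snd e u with hz
  have hez : Incid fst snd e z := othV_incid e u
  have hkey : ∀ f ∈ DomF fst snd prec e, 0 < x f →
      Incid fst snd f z ∧ f ≠ e ∧ prec z f e := by
    intro f hf hpos
    obtain ⟨hne, w, hew, hfw, hp⟩ := (Finset.mem_filter.mp hf).2
    rcases incid_cases hb.1 hew with rfl | rfl
    · exact (asymP hord (hb.2.2 f hfw hpos hne) hp).elim
    · exact ⟨hfw, hne, hp⟩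
  have hD : 1 ≤ x e + ∑ f ∈ DomF fst snd prec e, x f := hstab e
  have hdrop : ∑ f ∈ DomF fst snd prec e, x f
      = ∑ f ∈ (DomF fst snd prec e).filter (fun f => 0 < x f), x f := by
    rw [Finset.sum_filter_of_ne]
    intro f _ hne
    exact lt_of_le_of_ne (h0 f) (Ne.symm hne)
  have hsub : (DomF fst snd prec e).filter (fun f => 0 < x f) ⊆ (incF fst snd z).erase e := by
    intro f hf
    obtain ⟨hfD, hfp⟩ := Finset.mem_filter.mp hf
    obtain ⟨hfz, hfe, _⟩ := hkey f hfD hfp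
    exact Finset.mem_erase.mpr ⟨hfe, mem_incF.mpr hfz⟩
  have h4 : ∑ f ∈ (DomF fst snd prec e).filter (fun f => 0 < x f), x f
      ≤ ∑ f ∈ (incF fst snd z).erase e, x f :=
    Finset.sum_le_sum_of_subset_of_nonneg hsub (fun i _ _ => h0 i)
  have h5 : ∑ f ∈ (incF fst snd z).erase e, x f = (∑ f ∈ incF fst snd z, x f) - x e :=
    Finset.sum_erase_eq_sub (mem_incF.mpr hez)
  have h6 := hdeg z
  constructor
  · linarith [hdrop ▸ hD]
  · intro f hfz hfp hfe
    by_contra hnp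
    have hfnotin : f ∉ (DomF fst snd prec e).filter (fun f => 0 < x f) := by
      intro hin
      obtain ⟨hfD, _⟩ := Finset.mem_filter.mp hin
      exact hnp (hkey f hfD hfp).2.2
    have hlt := Finset.sum_lt_sum_of_subset hsub
      (Finset.mem_erase.mpr ⟨hfe, mem_incF.mpr hfz⟩) hfnotin hfp (fun j _ _ => h0 j)
    have hD' : 1 ≤ x e + ∑ f ∈ (DomF fst snd prec e).filter (fun f => 0 < x f), x f :=
      hdrop ▸ hD
    linarith

lemma sigma_surj (hord : IsPrefOrder fst snd prec) (hsimple : SimpleG fst snd)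
    (h0 : ∀ e, 0 ≤ x e) (hdeg : ∀ v, ∑ e ∈ incF fst snd v, x e ≤ 1)
    (hstab : ∀ g, 1 ≤ x g + ∑ f ∈ DomF fst snd prec g, x f) :
    ∀ v ∈ VFs fst snd x, ∃ u e, BstP fst snd prec x u e ∧ (0 < x e ∧ x e < 1) ∧
      othV fst snd e u = v := by
  classical
  set P : V → Prop := fun u => ∃ e, BstP fst snd prec x u e ∧ (0 < x e ∧ x e < 1) with hP
  set σg : V → V := fun u => if h : P u then othV fst snd h.choose u else u with hσ
  have hval : ∀ (u : V) (h : P u), σg u = othV fst snd h.choose u := by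
    intro u h
    simp only [hσ]
    exact dif_pos h
  have hmaps : ∀ u ∈ VFs fst snd x, σg u ∈ VFs fst snd x := by
    intro u hu
    have h : P u := bestExists hord h0 hdeg hu
    rw [hval u h]
    obtain ⟨hb, hfr⟩ := h.choose_spec
    exact VFs_mem (othV_incid _ _) hfr
  have hinj : Set.InjOn σg ↑(VFs fst snd x) := by
    intro u hu u' hu' heq
    have h : P u := bestExists hord h0 hdeg (Finset.mem_coe.mp hu)
    have h' : P u' := bestExists hord h0 hdeg (Finset.mem_coe.mp hu')
    rw [hval u h, hval u' h'] at heq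
    obtain ⟨hb, hfr⟩ := h.choose_spec
    obtain ⟨hb', hfr'⟩ := h'.choose_spec
    have hee : h.choose = h'.choose := by
      by_contra hne
      have h1 := (L2 hord hsimple h0 hdeg hstab hb).2 h'.choose
        (by rw [heq]; exact othV_incid _ _) hfr'.1 (Ne.symm hne)
      have h2 := (L2 hord hsimple h0 hdeg hstab hb').2 h.choose
        (by rw [← heq]; exact othV_incid _ _) hfr.1 hne
      rw [← heq] at h2
      exact asymP hord h2 h1
    rw [← hee] at hb' heq
    rcases incid_cases hb.1 hb'.1 with h3 | h3
    · exact h3.symm ▸ rfl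
    · exfalso
      apply othV_ne hsimple hb'.1
      rw [← heq, ← h3]
  have himg : (VFs fst snd x).image σg = VFs fst snd x :=
    Finset.eq_of_subset_of_card_le
      (fun w hw => by
        obtain ⟨u, hu, rfl⟩ := Finset.mem_image.mp hw
        exact hmaps u hu)
      (le_of_eq (Finset.card_image_of_injOn hinj).symm)
  intro v hv
  rw [← himg] at hv
  obtain ⟨u, hu, huv⟩ := Finset.mem_image.mp hv
  have h : P u := bestExists hord h0 hdeg hu
  rw [hval u h] at huv
  exact ⟨u, h.choose, h.choose_spec.1, h.choose_spec.2, huv⟩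

lemma degVF (hord : IsPrefOrder fst snd prec) (hsimple : SimpleG fst snd)
    (h0 : ∀ e, 0 ≤ x e) (hdeg : ∀ v, ∑ e ∈ incF fst snd v, x e ≤ 1)
    (hstab : ∀ g, 1 ≤ x g + ∑ f ∈ DomF fst snd prec g, x f)
    {v : V} (hv : v ∈ VFs fst snd x) :
    ∑ f ∈ incF fst snd v, x f = 1 := by
  obtain ⟨u, e, hb, hfr, hoth⟩ := sigma_surj hord hsimple h0 hdeg hstab v hv
  have h := (L2 hord hsimple h0 hdeg hstab hb).1
  rw [hoth] at h
  exact h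

lemma worstExists (hord : IsPrefOrder fst snd prec) (hsimple : SimpleG fst snd)
    (h0 : ∀ e, 0 ≤ x e) (hdeg : ∀ v, ∑ e ∈ incF fst snd v, x e ≤ 1)
    (hstab : ∀ g, 1 ≤ x g + ∑ f ∈ DomF fst snd prec g, x f)
    {v : V} (hv : v ∈ VFs fst snd x) :
    ∃ e u, WstP fst snd prec x v e ∧ (0 < x e ∧ x e < 1) ∧ Incid fst snd e u ∧
      BstP fst snd prec x u e := by
  obtain ⟨u, e, hb, hfr, hoth⟩ := sigma_surj hord hsimple h0 hdeg hstab v hv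
  have hL := L2 hord hsimple h0 hdeg hstab hb
  refine ⟨e, u, ⟨?_, hfr.1, ?_⟩, hfr, hb.1, hb⟩
  · rw [← hoth]; exact othV_incid e u
  · intro f hfv hfp hfe
    have h := hL.2 f (by rw [hoth]; exact hfv) hfp hfe
    rw [hoth] at h
    exact h

lemma Wst_to_Bst (hord : IsPrefOrder fst snd prec) (hsimple : SimpleG fst snd)
    (h0 : ∀ e, 0 ≤ x e) (hdeg : ∀ v, ∑ e ∈ incF fst snd v, x e ≤ 1)
    (hstab : ∀ g, 1 ≤ x g + ∑ f ∈ DomF fst snd prec g, x f)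
    {v : V} {g : E} (hv : v ∈ VFs fst snd x) (hw : WstP fst snd prec x v g) :
    ∃ u, Incid fst snd g u ∧ BstP fst snd prec x u g := by
  obtain ⟨e, u, hwe, hfr, heu, hbu⟩ := worstExists hord hsimple h0 hdeg hstab hv
  have : g = e := WstP_unique hord hw hwe
  subst this
  exact ⟨u, heu, hbu⟩

lemma Bst_implies_Wst (hord : IsPrefOrder fst snd prec) (hsimple : SimpleG fst snd)
    (h0 : ∀ e, 0 ≤ x e) (hdeg : ∀ v, ∑ e ∈ incF fst snd v, x e ≤ 1)
    (hstab : ∀ g, 1 ≤ x g + ∑ f ∈ DomF fst snd prec g, x f)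
    {u : V} {e : E} (hb : BstP fst snd prec x u e) :
    WstP fst snd prec x (othV fst snd e u) e :=
  ⟨othV_incid e u, hb.2.1, (L2 hord hsimple h0 hdeg hstab hb).2⟩

lemma r_nonfrac {e : E} (h : ¬ (0 < x e ∧ x e < 1)) : rfun fst snd prec x e = x e :=
  if_neg h

lemma r_zero (h0 : ∀ e, 0 ≤ x e) {e : E} (h : x e = 0) : rfun fst snd prec x e = 0 := by
  rw [r_nonfrac, h]
  rw [h]; intro hc; exact absurd hc.1 (by norm_num)

lemma r_B {e : E} (hfr : 0 < x e ∧ x e < 1)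
    (hex : ∃ v, Incid fst snd e v ∧ BstP fst snd prec x v e) :
    rfun fst snd prec x e = 1/2 := by
  obtain ⟨v, hv, hb⟩ := hex
  rw [rfun, if_pos hfr, if_pos]
  rcases hv with h | h
  · subst h; exact Or.inl hb
  · subst h; exact Or.inr hb

lemma r_mid (hord : IsPrefOrder fst snd prec) (hsimple : SimpleG fst snd)
    (h0 : ∀ e, 0 ≤ x e) (hdeg : ∀ v, ∑ e ∈ incF fst snd v, x e ≤ 1)
    (hstab : ∀ g, 1 ≤ x g + ∑ f ∈ DomF fst snd prec g, x f)
    {v : V} {f : E} (hv : v ∈ VFs fst snd x) (hf : Incid fst snd f v)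
    (hfr : 0 < x f ∧ x f < 1)
    (hnb : ¬ BstP fst snd prec x v f) (hnw : ¬ WstP fst snd prec x v f) :
    rfun fst snd prec x f = 0 := by
  rw [rfun, if_pos hfr, if_neg]
  rintro (hB | hB)
  · rcases incid_cases hf (Or.inl rfl : Incid fst snd f (fst f)) with h | h
    · exact hnb (h ▸ hB)
    · have hW := Bst_implies_Wst hord hsimple h0 hdeg hstab hB
      rw [h, othV_othV hsimple hf] at hW
      exact hnw hW
  · rcases incid_cases hf (Or.inr rfl : Incid fst snd f (snd f)) with h | h
    · exact hnb (h ▸ hB)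
    · have hW := Bst_implies_Wst hord hsimple h0 hdeg hstab hB
      rw [h, othV_othV hsimple hf] at hW
      exact hnw hW

lemma xsum_pos (hord : IsPrefOrder fst snd prec) (hsimple : SimpleG fst snd)
    (h0 : ∀ e, 0 ≤ x e) (hdeg : ∀ v, ∑ e ∈ incF fst snd v, x e ≤ 1)
    (hstab : ∀ g, 1 ≤ x g + ∑ f ∈ DomF fst snd prec g, x f)
    {v : V} (hv : v ∈ VFs fst snd x) :
    ∑ f ∈ (incF fst snd v).filter (fun f => 0 < x f), x f = 1 := by
  rw [Finset.sum_filter_of_ne (fun f _ hne => lt_of_le_of_ne (h0 f) (Ne.symm hne))]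
  exact degVF hord hsimple h0 hdeg hstab hv

lemma rsum_pos (hord : IsPrefOrder fst snd prec) (hsimple : SimpleG fst snd)
    (h0 : ∀ e, 0 ≤ x e) (hdeg : ∀ v, ∑ e ∈ incF fst snd v, x e ≤ 1)
    (hstab : ∀ g, 1 ≤ x g + ∑ f ∈ DomF fst snd prec g, x f)
    {v : V} (hv : v ∈ VFs fst snd x) :
    ∑ f ∈ (incF fst snd v).filter (fun f => 0 < x f), rfun fst snd prec x f = 1 := by
  classical
  obtain ⟨eb, hbB, hbfr⟩ := bestExists hord h0 hdeg hv
  obtain ⟨ew, u, hwW, hwfr, hwu, hwB⟩ := worstExists hord hsimple h0 hdeg hstab hv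
  have hne : eb ≠ ew := by
    intro h
    subst h
    have huniq : ∀ f, Incid fst snd f v → 0 < x f → f = eb := by
      intro f hf hp
      by_contra hne
      exact asymP hord (hbB.2.2 f hf hp hne) (hwW.2.2 f hf hp hne)
    have hdropx : ∑ f ∈ incF fst snd v, x f = x eb := by
      rw [Finset.sum_eq_single_of_mem eb (mem_incF.mpr hbB.1)]
      intro f hfm hfne
      by_contra hne0
      have hp := lt_of_le_of_ne (h0 f) (Ne.symm hne0)
      exact hfne (huniq f (mem_incF.mp hfm) hp)
    have hd := degVF hord hsimple h0 hdeg hstab hv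
    rw [hdropx] at hd
    exact absurd hd (ne_of_lt hbfr.2)
  set s := (incF fst snd v).filter (fun f => 0 < x f) with hs
  have hbm : eb ∈ s := Finset.mem_filter.mpr ⟨mem_incF.mpr hbB.1, hbB.2.1⟩
  have hwm : ew ∈ s := Finset.mem_filter.mpr ⟨mem_incF.mpr hwW.1, hwW.2.1⟩
  have hwm' : ew ∈ s.erase eb := Finset.mem_erase.mpr ⟨Ne.symm hne, hwm⟩
  have h1 : ∑ f ∈ s, rfun fst snd prec x f
      = ∑ f ∈ s.erase eb, rfun fst snd prec x f + rfun fst snd prec x eb :=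
    (Finset.sum_erase_add _ _ hbm).symm
  have h2 : ∑ f ∈ s.erase eb, rfun fst snd prec x f
      = ∑ f ∈ (s.erase eb).erase ew, rfun fst snd prec x f + rfun fst snd prec x ew :=
    (Finset.sum_erase_add _ _ hwm').symm
  have h3 : ∑ f ∈ (s.erase eb).erase ew, rfun fst snd prec x f = 0 := by
    apply Finset.sum_eq_zero
    intro f hf
    have hfew := (Finset.mem_erase.mp hf).1
    have hfeb := (Finset.mem_erase.mp (Finset.mem_erase.mp hf).2).1
    have hfs := (Finset.mem_erase.mp (Finset.mem_erase.mp hf).2).2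
    obtain ⟨hfI, hfp⟩ := Finset.mem_filter.mp hfs
    have hfv := mem_incF.mp hfI
    refine r_mid hord hsimple h0 hdeg hstab hv hfv ⟨hfp, noOneAt h0 hdeg hv hfv hfp⟩ ?_ ?_
    · intro hB; exact hfeb (BstP_unique hord hB hbB)
    · intro hW; exact hfew (WstP_unique hord hW hwW)
  have hrb : rfun fst snd prec x eb = 1/2 := r_B hbfr ⟨v, hbB.1, hbB⟩
  have hrw : rfun fst snd prec x ew = 1/2 := r_B hwfr ⟨u, hwu, hwB⟩
  rw [h1, h2, h3, hrb, hrw]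
  norm_num

lemma rdeg (hord : IsPrefOrder fst snd prec) (hsimple : SimpleG fst snd)
    (h0 : ∀ e, 0 ≤ x e) (hdeg : ∀ v, ∑ e ∈ incF fst snd v, x e ≤ 1)
    (hstab : ∀ g, 1 ≤ x g + ∑ f ∈ DomF fst snd prec g, x f)
    {v : V} (hv : v ∈ VFs fst snd x) :
    ∑ f ∈ incF fst snd v, rfun fst snd prec x f = 1 := by
  rw [← Finset.sum_filter_of_ne (p := fun f => 0 < x f)
    (fun f _ hne => by
      by_contra hnp
      exact hne (r_zero h0 (le_antisymm (not_lt.mp hnp) (h0 f))))]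
  exact rsum_pos hord hsimple h0 hdeg hstab hv

lemma degrow_r (hord : IsPrefOrder fst snd prec) (hsimple : SimpleG fst snd)
    (h0 : ∀ e, 0 ≤ x e) (hdeg : ∀ v, ∑ e ∈ incF fst snd v, x e ≤ 1)
    (hstab : ∀ g, 1 ≤ x g + ∑ f ∈ DomF fst snd prec g, x f)
    (v : V) (ht : ∑ f ∈ incF fst snd v, x f = 1) :
    ∑ f ∈ incF fst snd v, rfun fst snd prec x f = 1 := by
  by_cases hv : v ∈ VFs fst snd x
  · exact rdeg hord hsimple h0 hdeg hstab hv
  · rw [← ht]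
    apply Finset.sum_congr rfl
    intro f hf
    apply r_nonfrac
    intro hfr
    exact hv (VFs_mem (mem_incF.mp hf) hfr)

lemma Pside_empty_of_Bst (hord : IsPrefOrder fst snd prec) {p : V} {g : E}
    (hb : BstP fst snd prec x p g) :
    PsideF fst snd prec x p g = ∅ := by
  ext f
  simp only [PsideF, Finset.mem_filter, Finset.mem_univ, true_and, Finset.notMem_empty,
    iff_false]
  rintro ⟨hfp, hfg, hpfg, hfpos⟩
  exact asymP hord (hb.2.2 f hfp hfpos hfg) hpfg

lemma Pside_of_Wst {p : V} {g : E} (hw : WstP fst snd prec x p g) :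
    PsideF fst snd prec x p g = ((incF fst snd p).filter (fun f => 0 < x f)).erase g := by
  ext f
  constructor
  · intro hf
    obtain ⟨-, hfp, hfg, hpfg, hfpos⟩ := Finset.mem_filter.mp hf
    exact Finset.mem_erase.mpr ⟨hfg, Finset.mem_filter.mpr ⟨mem_incF.mpr hfp, hfpos⟩⟩
  · intro hf
    obtain ⟨hfg, hfm⟩ := Finset.mem_erase.mp hf
    obtain ⟨hfI, hfpos⟩ := Finset.mem_filter.mp hfm
    exact Finset.mem_filter.mpr ⟨Finset.mem_univ _, mem_incF.mp hfI, hfg,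
      hw.2.2 f (mem_incF.mp hfI) hfpos hfg, hfpos⟩

lemma Pside_mid_rsum (hord : IsPrefOrder fst snd prec) (hsimple : SimpleG fst snd)
    (h0 : ∀ e, 0 ≤ x e) (hdeg : ∀ v, ∑ e ∈ incF fst snd v, x e ≤ 1)
    (hstab : ∀ g, 1 ≤ x g + ∑ f ∈ DomF fst snd prec g, x f)
    {p : V} {g : E} (hp : p ∈ VFs fst snd x) (hgp : Incid fst snd g p) (hgpos : 0 < x g)
    (hnb : ¬ BstP fst snd prec x p g) (hnw : ¬ WstP fst snd prec x p g) :
    ∑ f ∈ PsideF fst snd prec x p g, rfun fst snd prec x f = 1/2 := by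
  classical
  obtain ⟨eb, hbB, hbfr⟩ := bestExists hord h0 hdeg hp
  have hgeb : g ≠ eb := fun h => hnb (h ▸ hbB)
  have hbmem : eb ∈ PsideF fst snd prec x p g :=
    Finset.mem_filter.mpr ⟨Finset.mem_univ _, hbB.1, Ne.symm hgeb,
      hbB.2.2 g hgp hgpos hgeb, hbB.2.1⟩
  have hz : ∀ f ∈ (PsideF fst snd prec x p g).erase eb, rfun fst snd prec x f = 0 := by
    intro f hf
    obtain ⟨hfeb, hfm⟩ := Finset.mem_erase.mp hf
    obtain ⟨-, hfp, hfg, hpfg, hfpos⟩ := Finset.mem_filter.mp hfm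
    refine r_mid hord hsimple h0 hdeg hstab hp hfp ⟨hfpos, noOneAt h0 hdeg hp hfp hfpos⟩ ?_ ?_
    · intro hB; exact hfeb (BstP_unique hord hB hbB)
    · intro hW
      have hgf : g ≠ f := Ne.symm hfg
      exact asymP hord hpfg (hW.2.2 g hgp hgpos hgf)
  have h1 : ∑ f ∈ PsideF fst snd prec x p g, rfun fst snd prec x f
      = ∑ f ∈ (PsideF fst snd prec x p g).erase eb, rfun fst snd prec x f
        + rfun fst snd prec x eb :=
    (Finset.sum_erase_add _ _ hbmem).symm
  rw [h1, Finset.sum_eq_zero hz, r_B hbfr ⟨p, hbB.1, hbB⟩]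
  norm_num

/-- Analysis of one side of the stability row of a zero edge. -/
lemma side_zero (hord : IsPrefOrder fst snd prec) (hsimple : SimpleG fst snd)
    (h0 : ∀ e, 0 ≤ x e) (hdeg : ∀ v, ∑ e ∈ incF fst snd v, x e ≤ 1)
    (hstab : ∀ g, 1 ≤ x g + ∑ f ∈ DomF fst snd prec g, x f)
    {w : V} {g : E} (hgw : Incid fst snd g w) (hg0 : x g = 0) :
    (∑ f ∈ PsideF fst snd prec x w g, x f = 0 ∧
      ∑ f ∈ PsideF fst snd prec x w g, rfun fst snd prec x f = 0) ∨
    (∑ f ∈ PsideF fst snd prec x w g, x f = 1 ∧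
      ∑ f ∈ PsideF fst snd prec x w g, rfun fst snd prec x f = 1) ∨
    (0 < ∑ f ∈ PsideF fst snd prec x w g, x f ∧
      (∑ f ∈ PsideF fst snd prec x w g, x f) < 1 ∧
      ∑ f ∈ PsideF fst snd prec x w g, rfun fst snd prec x f = 1/2) := by
  classical
  have hgne : ∀ f : E, 0 < x f → f ≠ g := by
    intro f hf h
    rw [h, hg0] at hf
    exact absurd hf (by norm_num)
  by_cases hw : w ∈ VFs fst snd x
  · obtain ⟨ew, u, hwW, hwfr, hwu, hwB⟩ := worstExists hord hsimple h0 hdeg hstab hw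
    by_cases hWin : ew ∈ PsideF fst snd prec x w g
    · -- full prefix
      right; left
      obtain ⟨-, -, -, hewg, -⟩ := Finset.mem_filter.mp hWin
      have hfull : PsideF fst snd prec x w g = (incF fst snd w).filter (fun f => 0 < x f) := by
        ext f
        constructor
        · intro hf
          obtain ⟨-, hfw, -, -, hfpos⟩ := Finset.mem_filter.mp hf
          exact Finset.mem_filter.mpr ⟨mem_incF.mpr hfw, hfpos⟩
        · intro hf
          obtain ⟨hfI, hfpos⟩ := Finset.mem_filter.mp hf
          have hfw := mem_incF.mp hfI
          refine Finset.mem_filter.mpr ⟨Finset.mem_univ _, hfw, hgne f hfpos, ?_, hfpos⟩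
          rcases eq_or_ne f ew with rfl | hne
          · exact hewg
          · exact hord.2.1 w f ew g (hwW.2.2 f hfw hfpos hne) hewg
      rw [hfull]
      exact ⟨xsum_pos hord hsimple h0 hdeg hstab hw, rsum_pos hord hsimple h0 hdeg hstab hw⟩
    · by_cases hne : (PsideF fst snd prec x w g).Nonempty
      · right; right
        obtain ⟨f0, hf0⟩ := hne
        obtain ⟨-, hf0w, hf0g, hpf0g, hf0pos⟩ := Finset.mem_filter.mp hf0
        obtain ⟨eb, hbB, hbfr⟩ := bestExists hord h0 hdeg hw
        have hbmem : eb ∈ PsideF fst snd prec x w g := by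
          refine Finset.mem_filter.mpr ⟨Finset.mem_univ _, hbB.1, hgne eb hbB.2.1, ?_, hbB.2.1⟩
          rcases eq_or_ne f0 eb with rfl | hne0
          · exact hpf0g
          · exact hord.2.1 w eb f0 g (hbB.2.2 f0 hf0w hf0pos hne0) hpf0g
        refine ⟨?_, ?_, ?_⟩
        · calc (0:ℝ) < x eb := hbfr.1
            _ ≤ ∑ f ∈ PsideF fst snd prec x w g, x f :=
              Finset.single_le_sum (fun i _ => h0 i) hbmem
        · have hsub : PsideF fst snd prec x w g
              ⊆ ((incF fst snd w).filter (fun f => 0 < x f)).erase ew := by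
            intro f hf
            obtain ⟨-, hfw, -, -, hfpos⟩ := Finset.mem_filter.mp hf
            refine Finset.mem_erase.mpr ⟨?_, Finset.mem_filter.mpr ⟨mem_incF.mpr hfw, hfpos⟩⟩
            intro h
            rw [h] at hf
            exact hWin hf
          have h1 := Finset.sum_le_sum_of_subset_of_nonneg hsub (fun i _ _ => h0 i)
          have h2 : ∑ f ∈ ((incF fst snd w).filter (fun f => 0 < x f)).erase ew, x f
              = (∑ f ∈ (incF fst snd w).filter (fun f => 0 < x f), x f) - x ew :=
            Finset.sum_erase_eq_sub (Finset.mem_filter.mpr ⟨mem_incF.mpr hwW.1, hwW.2.1⟩)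
          have h3 := xsum_pos hord hsimple h0 hdeg hstab hw
          rw [h2, h3] at h1
          linarith [hwfr.1]
        · have hz : ∀ f ∈ (PsideF fst snd prec x w g).erase eb,
              rfun fst snd prec x f = 0 := by
            intro f hf
            obtain ⟨hfeb, hfm⟩ := Finset.mem_erase.mp hf
            obtain ⟨-, hfw, hfg, hpfg, hfpos⟩ := Finset.mem_filter.mp hfm
            refine r_mid hord hsimple h0 hdeg hstab hw hfw
              ⟨hfpos, noOneAt h0 hdeg hw hfw hfpos⟩ ?_ ?_
            · intro hB; exact hfeb (BstP_unique hord hB hbB)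
            · intro hW
              have : f = ew := WstP_unique hord hW hwW
              rw [this] at hfm
              exact hWin hfm
          have h1 : ∑ f ∈ PsideF fst snd prec x w g, rfun fst snd prec x f
              = ∑ f ∈ (PsideF fst snd prec x w g).erase eb, rfun fst snd prec x f
                + rfun fst snd prec x eb :=
            (Finset.sum_erase_add _ _ hbmem).symm
          rw [h1, Finset.sum_eq_zero hz, r_B hbfr ⟨w, hbB.1, hbB⟩]
          norm_num
      · left
        rw [Finset.not_nonempty_iff_eq_empty] at hne
        rw [hne]
        simp
  · -- w is not a fractional vertex : all positive edges at w have value 1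
    have hone : ∀ f ∈ PsideF fst snd prec x w g, x f = 1 := by
      intro f hf
      obtain ⟨-, hfw, -, -, hfpos⟩ := Finset.mem_filter.mp hf
      by_contra hne
      have hlt : x f < 1 := lt_of_le_of_ne (x_le_one h0 hdeg f) hne
      exact hw (VFs_mem hfw ⟨hfpos, hlt⟩)
    by_cases hne : (PsideF fst snd prec x w g).Nonempty
    · right; left
      obtain ⟨f0, hf0⟩ := hne
      have hsingle : PsideF fst snd prec x w g = {f0} := by
        ext f
        simp only [Finset.mem_singleton]
        constructor
        · intro hf
          by_contra hne0
          obtain ⟨-, hfw, -, -, hfpos⟩ := Finset.mem_filter.mp hf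
          obtain ⟨-, hf0w, -, -, -⟩ := Finset.mem_filter.mp hf0
          exact onekills h0 hdeg hfw hf0w hne0 (hone f hf) (by
            rw [hone f0 hf0]; norm_num)
        · intro h; rw [h]; exact hf0
      rw [hsingle, Finset.sum_singleton, Finset.sum_singleton]
      have hx1 := hone f0 hf0
      constructor
      · exact hx1
      · rw [r_nonfrac, hx1]
        rw [hx1]
        intro hc
        exact absurd hc.2 (by norm_num)
    · left
      rw [Finset.not_nonempty_iff_eq_empty] at hne
      rw [hne]
      simp

/-- Splitting the dominator sum of `g` into its two endpoint sides. -/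
lemma Dsplit (hsimple : SimpleG fst snd) (h0 : ∀ e, 0 ≤ x e)
    (h : E → ℝ) (hzero : ∀ e, x e = 0 → h e = 0) (g : E) :
    ∑ f ∈ DomF fst snd prec g, h f
      = ∑ f ∈ PsideF fst snd prec x (fst g) g, h f
        + ∑ f ∈ PsideF fst snd prec x (snd g) g, h f := by
  classical
  have hdrop : ∑ f ∈ DomF fst snd prec g, h f
      = ∑ f ∈ (DomF fst snd prec g).filter (fun f => 0 < x f), h f := by
    rw [Finset.sum_filter_of_ne]
    intro f _ hne
    by_contra hnp
    exact hne (hzero f (le_antisymm (not_lt.mp hnp) (h0 f)))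
  have hoth : othV fst snd g (fst g) = snd g := by
    rw [othV, if_pos rfl]
  have hset : (DomF fst snd prec g).filter (fun f => 0 < x f)
      = PsideF fst snd prec x (fst g) g ∪ PsideF fst snd prec x (snd g) g := by
    ext f
    constructor
    · intro hf
      obtain ⟨hfD, hfpos⟩ := Finset.mem_filter.mp hf
      obtain ⟨hne, w, hgw, hfw, hp⟩ := (Finset.mem_filter.mp hfD).2
      rcases incid_cases (Or.inl rfl : Incid fst snd g (fst g)) hgw with h1 | h1
      · subst h1
        exact Finset.mem_union_left _
          (Finset.mem_filter.mpr ⟨Finset.mem_univ _, hfw, hne, hp, hfpos⟩)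
      · rw [hoth] at h1
        subst h1
        exact Finset.mem_union_right _
          (Finset.mem_filter.mpr ⟨Finset.mem_univ _, hfw, hne, hp, hfpos⟩)
    · intro hf
      rcases Finset.mem_union.mp hf with hf | hf
      · obtain ⟨-, hfw, hne, hp, hfpos⟩ := Finset.mem_filter.mp hf
        refine Finset.mem_filter.mpr ⟨Finset.mem_filter.mpr
          ⟨Finset.mem_univ _, hne, fst g, Or.inl rfl, hfw, hp⟩, hfpos⟩
      · obtain ⟨-, hfw, hne, hp, hfpos⟩ := Finset.mem_filter.mp hf
        refine Finset.mem_filter.mpr ⟨Finset.mem_filter.mpr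
          ⟨Finset.mem_univ _, hne, snd g, Or.inr rfl, hfw, hp⟩, hfpos⟩
  have hdisj : Disjoint (PsideF fst snd prec x (fst g) g)
      (PsideF fst snd prec x (snd g) g) := by
    rw [Finset.disjoint_left]
    intro f hf1 hf2
    have hpq : fst g ≠ snd g := hsimple.1 g
    obtain ⟨-, hfp, hfg, -, -⟩ := Finset.mem_filter.mp hf1
    obtain ⟨-, hfq, -, -, -⟩ := Finset.mem_filter.mp hf2
    rcases hfp with h1 | h1 <;> rcases hfq with h2 | h2
    · exact hpq (h1.symm.trans h2)
    · exact hsimple.2 g f (Ne.symm hfg) (Or.inl ⟨h1.symm, h2.symm⟩)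
    · exact hsimple.2 g f (Ne.symm hfg) (Or.inr ⟨h1.symm, h2.symm⟩)
    · exact hpq (h1.symm.trans h2)
  rw [hdrop, hset, Finset.sum_union hdisj]

/-- If the stability row of `g` is tight for `x`, then it has value exactly `1` for `r`. -/
lemma stabrow_r (hord : IsPrefOrder fst snd prec) (hsimple : SimpleG fst snd)
    (h0 : ∀ e, 0 ≤ x e) (hdeg : ∀ v, ∑ e ∈ incF fst snd v, x e ≤ 1)
    (hstab : ∀ g, 1 ≤ x g + ∑ f ∈ DomF fst snd prec g, x f)
    (g : E) (ht : x g + ∑ f ∈ DomF fst snd prec g, x f = 1) :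
    rfun fst snd prec x g + ∑ f ∈ DomF fst snd prec g, rfun fst snd prec x f = 1 := by
  classical
  have hsx := Dsplit (prec := prec) (x := x) hsimple h0 x (fun e he => he) g
  have hsr := Dsplit (prec := prec) (x := x) hsimple h0 (rfun fst snd prec x) (fun e he => r_zero h0 he) g
  have hoth : othV fst snd g (fst g) = snd g := by rw [othV, if_pos rfl]
  have hoth2 : othV fst snd g (snd g) = fst g := by rw [othV, if_neg (hsimple.1 g)]
  by_cases hfr : 0 < x g ∧ x g < 1
  · have hp : (fst g) ∈ VFs fst snd x := VFs_mem (Or.inl rfl) hfr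
    have hq : (snd g) ∈ VFs fst snd x := VFs_mem (Or.inr rfl) hfr
    have hgmem_q : g ∈ (incF fst snd (snd g)).filter (fun f => 0 < x f) :=
      Finset.mem_filter.mpr ⟨mem_incF.mpr (Or.inr rfl), hfr.1⟩
    have hgmem_p : g ∈ (incF fst snd (fst g)).filter (fun f => 0 < x f) :=
      Finset.mem_filter.mpr ⟨mem_incF.mpr (Or.inl rfl), hfr.1⟩
    by_cases hbp : BstP fst snd prec x (fst g) g
    · by_cases hbq : BstP fst snd prec x (snd g) g
      · exfalso
        rw [hsx, Pside_empty_of_Bst hord hbp, Pside_empty_of_Bst hord hbq,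
          Finset.sum_empty] at ht
        simp at ht
        linarith [hfr.2]
      · -- g best at fst g, worst at snd g
        have hwq : WstP fst snd prec x (snd g) g := by
          have h := Bst_implies_Wst hord hsimple h0 hdeg hstab hbp
          rwa [hoth] at h
        have hrg : rfun fst snd prec x g = 1/2 := r_B hfr ⟨fst g, Or.inl rfl, hbp⟩
        rw [hsr, Pside_empty_of_Bst hord hbp, Finset.sum_empty, Pside_of_Wst hwq,
          Finset.sum_erase_eq_sub hgmem_q, rsum_pos hord hsimple h0 hdeg hstab hq, hrg]
        ring
    · by_cases hbq : BstP fst snd prec x (snd g) g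
      · have hwp : WstP fst snd prec x (fst g) g := by
          have h := Bst_implies_Wst hord hsimple h0 hdeg hstab hbq
          rwa [hoth2] at h
        have hrg : rfun fst snd prec x g = 1/2 := r_B hfr ⟨snd g, Or.inr rfl, hbq⟩
        rw [hsr, Pside_empty_of_Bst hord hbq, Finset.sum_empty, Pside_of_Wst hwp,
          Finset.sum_erase_eq_sub hgmem_p, rsum_pos hord hsimple h0 hdeg hstab hp, hrg]
        ring
      · -- middle edge
        have hnwp : ¬ WstP fst snd prec x (fst g) g := by
          intro hW
          obtain ⟨u, hgu, hbu⟩ := Wst_to_Bst hord hsimple h0 hdeg hstab hp hW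
          rcases incid_cases (Or.inl rfl : Incid fst snd g (fst g)) hgu with h | h
          · exact hbp (h ▸ hbu)
          · rw [hoth] at h
            exact hbq (h ▸ hbu)
        have hnwq : ¬ WstP fst snd prec x (snd g) g := by
          intro hW
          obtain ⟨u, hgu, hbu⟩ := Wst_to_Bst hord hsimple h0 hdeg hstab hq hW
          rcases incid_cases (Or.inr rfl : Incid fst snd g (snd g)) hgu with h | h
          · exact hbq (h ▸ hbu)
          · rw [hoth2] at h
            exact hbp (h ▸ hbu)
        have hrg : rfun fst snd prec x g = 0 := by
          rw [rfun, if_pos hfr, if_neg]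
          rintro (h | h)
          · exact hbp h
          · exact hbq h
        rw [hsr, Pside_mid_rsum hord hsimple h0 hdeg hstab hp (Or.inl rfl) hfr.1 hbp hnwp,
          Pside_mid_rsum hord hsimple h0 hdeg hstab hq (Or.inr rfl) hfr.1 hbq hnwq, hrg]
        norm_num
  · have h01 : x g = 0 ∨ x g = 1 := by
      rcases eq_or_lt_of_le (h0 g) with h | h
      · left; exact h.symm
      · rcases eq_or_lt_of_le (x_le_one h0 hdeg g) with h' | h'
        · right; exact h'
        · exact absurd ⟨h, h'⟩ hfr
    rcases h01 with hg0 | hg1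
    · have hrg : rfun fst snd prec x g = 0 := r_zero h0 hg0
      rw [hsx, hg0] at ht
      rw [hsr, hrg]
      rcases side_zero (x := x) hord hsimple h0 hdeg hstab (Or.inl rfl : Incid fst snd g (fst g)) hg0
        with ⟨hx1, hr1⟩ | ⟨hx1, hr1⟩ | ⟨hx1a, hx1b, hr1⟩ <;>
      rcases side_zero (x := x) hord hsimple h0 hdeg hstab (Or.inr rfl : Incid fst snd g (snd g)) hg0
        with ⟨hx2, hr2⟩ | ⟨hx2, hr2⟩ | ⟨hx2a, hx2b, hr2⟩
      · exfalso; linarith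
      · rw [hr1, hr2]; norm_num
      · exfalso; linarith
      · rw [hr1, hr2]; norm_num
      · exfalso; linarith
      · exfalso; linarith
      · exfalso; linarith
      · exfalso; linarith
      · rw [hr1, hr2]; norm_num
    · -- x g = 1 : nothing fractional in the row
      have hcong : ∀ f ∈ DomF fst snd prec g, rfun fst snd prec x f = x f := by
        intro f hf
        obtain ⟨hne, w, hgw, hfw, hp⟩ := (Finset.mem_filter.mp hf).2
        have hf0 : ¬ 0 < x f := onekills h0 hdeg hgw hfw (Ne.symm hne) hg1
        have hxf : x f = 0 := le_antisymm (not_lt.mp hf0) (h0 f)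
        rw [r_zero h0 hxf, hxf]
      have hrg : rfun fst snd prec x g = x g := by
        apply r_nonfrac
        intro hc
        rw [hg1] at hc
        exact absurd hc.2 (by norm_num)
      rw [Finset.sum_congr rfl hcong, hrg]
      exact ht

end Main

end AR

/-- Abeledo–Rothblum: every vertex (extreme point) of the fractional stable
matching polytope of a simple preference system is half-integral. -/
theorem stmt_6 {V E : Type} [Fintype V] [Fintype E] (fst snd : E → V)
    (prec : V → E → E → Prop) (hord : IsPrefOrder fst snd prec)
    (hsimple : SimpleG fst snd) :
    ∀ x ∈ Set.extremePoints ℝ (FSMset fst snd prec),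
      ∀ e, x e = 0 ∨ x e = 1 / 2 ∨ x e = 1 := by
  classical
  intro x hxe e
  obtain ⟨hxS, hX⟩ := hxe
  obtain ⟨h0, hdegS, hstabS⟩ := hxS
  have hdeg : ∀ v, ∑ f ∈ AR.incF fst snd v, x f ≤ 1 := hdegS
  have hstab : ∀ g, 1 ≤ x g + ∑ f ∈ AR.DomF fst snd prec g, x f := hstabS
  by_cases hall : ∀ e', x e' = AR.rfun fst snd prec x e'
  · -- x coincides with its canonical half-integral point
    have he := hall e
    by_cases hfr : 0 < x e ∧ x e < 1
    · rw [AR.rfun, if_pos hfr] at he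
      by_cases hB : AR.BstP fst snd prec x (fst e) e ∨ AR.BstP fst snd prec x (snd e) e
      · rw [if_pos hB] at he
        right; left; exact he
      · rw [if_neg hB] at he
        exact absurd he (ne_of_gt hfr.1)
    · by_cases h0e : 0 < x e
      · right; right
        have h1 : x e ≤ 1 := AR.x_le_one h0 hdeg e
        have h2 : ¬ x e < 1 := fun h => hfr ⟨h0e, h⟩
        exact le_antisymm h1 (not_lt.mp h2)
      · left; exact le_antisymm (not_lt.mp h0e) (h0 e)
  · exfalso
    push_neg at hall
    obtain ⟨e₀, he₀⟩ := hall
    set r : E → ℝ := AR.rfun fst snd prec x with hrdef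
    set d : E → ℝ := fun f => x f - r f with hddef
    -- global bound on partial sums of |d|
    set Kb : ℝ := ∑ f : E, |d f| with hKbdef
    have hKb0 : 0 ≤ Kb := Finset.sum_nonneg (fun i _ => abs_nonneg _)
    set K : ℝ := 2 * Kb + 2 with hKdef
    have hK : 0 < K := by rw [hKdef]; linarith
    have hKne : K ≠ 0 := ne_of_gt hK
    have hSd : ∀ s : Finset E, |∑ f ∈ s, d f| ≤ Kb := by
      intro s
      calc |∑ f ∈ s, d f| ≤ ∑ f ∈ s, |d f| := Finset.abs_sum_le_sum_abs _ _
        _ ≤ ∑ f : E, |d f| :=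
          Finset.sum_le_sum_of_subset_of_nonneg (Finset.subset_univ s)
            (fun i _ _ => abs_nonneg _)
        _ = Kb := rfl
    have hsingle : ∀ f : E, |d f| ≤ Kb := by
      intro f
      exact Finset.single_le_sum (f := fun f => |d f|) (fun i _ => abs_nonneg _)
        (Finset.mem_univ f) |>.trans_eq rfl
    -- the finite set of thresholds
    set T : Finset ℝ := insert 1 (
      (Finset.univ.image fun e : E => if 0 < x e ∧ x e < 1 then x e / K else 1) ∪
      (Finset.univ.image fun v : V =>
        if (∑ f ∈ AR.incF fst snd v, x f) < 1
        then (1 - ∑ f ∈ AR.incF fst snd v, x f) / K else 1) ∪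
      (Finset.univ.image fun g : E =>
        if 1 < x g + ∑ f ∈ AR.DomF fst snd prec g, x f
        then (x g + ∑ f ∈ AR.DomF fst snd prec g, x f - 1) / K else 1)) with hTdef
    have hTne : T.Nonempty := ⟨1, Finset.mem_insert_self _ _⟩
    set ε : ℝ := T.min' hTne with hεdef
    have hεpos : 0 < ε := by
      rw [hεdef, Finset.lt_min'_iff]
      intro a ha
      rw [hTdef] at ha
      rcases Finset.mem_insert.mp ha with rfl | ha
      · norm_num
      rcases Finset.mem_union.mp ha with ha | ha
      · rcases Finset.mem_union.mp ha with ha | ha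
        · obtain ⟨e', -, rfl⟩ := Finset.mem_image.mp ha
          split_ifs with h
          · exact div_pos h.1 hK
          · norm_num
        · obtain ⟨v', -, rfl⟩ := Finset.mem_image.mp ha
          split_ifs with h
          · exact div_pos (by linarith) hK
          · norm_num
      · obtain ⟨g', -, rfl⟩ := Finset.mem_image.mp ha
        split_ifs with h
        · exact div_pos (by linarith) hK
        · norm_num
    -- generic feasibility of x + s • d for |s| ≤ ε
    have hfeas : ∀ s : ℝ, |s| ≤ ε → (fun f => x f + s * d f) ∈ FSMset fst snd prec := by
      intro s hs
      have hs0 : 0 ≤ |s| := abs_nonneg s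
      refine ⟨?_, ?_, ?_⟩
      · -- nonnegativity
        intro f
        show 0 ≤ x f + s * d f
        by_cases hfr : 0 < x f ∧ x f < 1
        · have hεe : ε ≤ x f / K := by
            apply Finset.min'_le
            rw [hTdef]
            have hmem : (if 0 < x f ∧ x f < 1 then x f / K else 1) ∈
                (Finset.univ.image fun e : E => if 0 < x e ∧ x e < 1 then x e / K else 1) :=
              Finset.mem_image_of_mem _ (Finset.mem_univ f)
            rw [if_pos hfr] at hmem
            exact Finset.mem_insert_of_mem (Finset.mem_union_left _
              (Finset.mem_union_left _ hmem))
          have hb : |d f| ≤ K := by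
            have := hsingle f
            rw [hKdef]; linarith
          have h1 : |s * d f| ≤ (x f / K) * K := by
            rw [abs_mul]
            exact mul_le_mul (hs.trans hεe) hb (abs_nonneg _)
              (div_nonneg (le_of_lt hfr.1) (le_of_lt hK))
          rw [div_mul_cancel₀ _ hKne] at h1
          have h2 := neg_abs_le (s * d f)
          linarith
        · have hdf : d f = 0 := by
            rw [hddef]
            simp only
            rw [hrdef, AR.r_nonfrac hfr, sub_self]
          rw [hdf, mul_zero, add_zero]
          exact h0 f
      · -- degree constraints
        intro v
        show ∑ f ∈ AR.incF fst snd v, (x f + s * d f) ≤ 1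
        rw [Finset.sum_add_distrib, ← Finset.mul_sum]
        by_cases hv : ∑ f ∈ AR.incF fst snd v, x f = 1
        · have hrr : ∑ f ∈ AR.incF fst snd v, r f = 1 :=
            AR.degrow_r hord hsimple h0 hdeg hstab v hv
          have hdv : ∑ f ∈ AR.incF fst snd v, d f = 0 := by
            rw [hddef]
            rw [Finset.sum_sub_distrib, hv, hrr, sub_self]
          rw [hv, hdv, mul_zero, add_zero]
        · have hlt : ∑ f ∈ AR.incF fst snd v, x f < 1 := lt_of_le_of_ne (hdeg v) hv
          have hεv : ε ≤ (1 - ∑ f ∈ AR.incF fst snd v, x f) / K := by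
            apply Finset.min'_le
            rw [hTdef]
            have hmem : (if (∑ f ∈ AR.incF fst snd v, x f) < 1
                then (1 - ∑ f ∈ AR.incF fst snd v, x f) / K else 1) ∈
                (Finset.univ.image fun v' : V =>
                  if (∑ f ∈ AR.incF fst snd v', x f) < 1
                  then (1 - ∑ f ∈ AR.incF fst snd v', x f) / K else 1) :=
              Finset.mem_image_of_mem _ (Finset.mem_univ v)
            rw [if_pos hlt] at hmem
            exact Finset.mem_insert_of_mem (Finset.mem_union_left _
              (Finset.mem_union_right _ hmem))
          have hb : |∑ f ∈ AR.incF fst snd v, d f| ≤ K := by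
            have := hSd (AR.incF fst snd v)
            rw [hKdef]; linarith
          have h1 : |s * ∑ f ∈ AR.incF fst snd v, d f|
              ≤ ((1 - ∑ f ∈ AR.incF fst snd v, x f) / K) * K := by
            rw [abs_mul]
            exact mul_le_mul (hs.trans hεv) hb (abs_nonneg _)
              (div_nonneg (by linarith) (le_of_lt hK))
          rw [div_mul_cancel₀ _ hKne] at h1
          have h2 := le_abs_self (s * ∑ f ∈ AR.incF fst snd v, d f)
          linarith
      · -- stability constraints
        intro g
        show (x g + s * d g) + ∑ f ∈ AR.DomF fst snd prec g, (x f + s * d f) ≥ 1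
        rw [Finset.sum_add_distrib, ← Finset.mul_sum]
        have hre : (x g + s * d g) + (∑ f ∈ AR.DomF fst snd prec g, x f
            + s * ∑ f ∈ AR.DomF fst snd prec g, d f)
            = (x g + ∑ f ∈ AR.DomF fst snd prec g, x f)
              + s * (d g + ∑ f ∈ AR.DomF fst snd prec g, d f) := by ring
        rw [hre]
        by_cases hg : x g + ∑ f ∈ AR.DomF fst snd prec g, x f = 1
        · have hrr : r g + ∑ f ∈ AR.DomF fst snd prec g, r f = 1 :=
            AR.stabrow_r hord hsimple h0 hdeg hstab g hg
          have hdv : d g + ∑ f ∈ AR.DomF fst snd prec g, d f = 0 := by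
            rw [hddef]
            simp only
            rw [Finset.sum_sub_distrib]
            have : x g - r g + ((∑ f ∈ AR.DomF fst snd prec g, x f)
                - ∑ f ∈ AR.DomF fst snd prec g, r f)
                = (x g + ∑ f ∈ AR.DomF fst snd prec g, x f)
                  - (r g + ∑ f ∈ AR.DomF fst snd prec g, r f) := by ring
            rw [this, hg, hrr, sub_self]
          rw [hg, hdv, mul_zero, add_zero]
        · have hgt : 1 < x g + ∑ f ∈ AR.DomF fst snd prec g, x f :=
            lt_of_le_of_ne (hstab g) (Ne.symm hg)
          have hεg : ε ≤ (x g + ∑ f ∈ AR.DomF fst snd prec g, x f - 1) / K := by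
            apply Finset.min'_le
            rw [hTdef]
            have hmem : (if 1 < x g + ∑ f ∈ AR.DomF fst snd prec g, x f
                then (x g + ∑ f ∈ AR.DomF fst snd prec g, x f - 1) / K else 1) ∈
                (Finset.univ.image fun g' : E =>
                  if 1 < x g' + ∑ f ∈ AR.DomF fst snd prec g', x f
                  then (x g' + ∑ f ∈ AR.DomF fst snd prec g', x f - 1) / K else 1) :=
              Finset.mem_image_of_mem _ (Finset.mem_univ g)
            rw [if_pos hgt] at hmem
            exact Finset.mem_insert_of_mem (Finset.mem_union_right _ hmem)
          have hb : |d g + ∑ f ∈ AR.DomF fst snd prec g, d f| ≤ K := by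
            have h1 := hsingle g
            have h2 := hSd (AR.DomF fst snd prec g)
            calc |d g + ∑ f ∈ AR.DomF fst snd prec g, d f|
                ≤ |d g| + |∑ f ∈ AR.DomF fst snd prec g, d f| := abs_add_le _ _
              _ ≤ K := by rw [hKdef]; linarith
          have h1 : |s * (d g + ∑ f ∈ AR.DomF fst snd prec g, d f)|
              ≤ ((x g + ∑ f ∈ AR.DomF fst snd prec g, x f - 1) / K) * K := by
            rw [abs_mul]
            exact mul_le_mul (hs.trans hεg) hb (abs_nonneg _)
              (div_nonneg (by linarith) (le_of_lt hK))
          rw [div_mul_cancel₀ _ hKne] at h1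
          have h2 := neg_abs_le (s * (d g + ∑ f ∈ AR.DomF fst snd prec g, d f))
          linarith
    -- perturb in both directions and contradict extremality
    have hy := hfeas ε (le_of_eq (abs_of_pos hεpos))
    have hz := hfeas (-ε) (le_of_eq (by rw [abs_neg, abs_of_pos hεpos]))
    have hseg : x ∈ openSegment ℝ (fun f => x f + ε * d f) (fun f => x f + (-ε) * d f) := by
      refine ⟨1/2, 1/2, by norm_num, by norm_num, by norm_num, ?_⟩
      funext f
      simp only [Pi.add_apply, Pi.smul_apply, smul_eq_mul]
      ring
    have hy1 := hX hy hz hseg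
    have hcf := congrFun hy1 e₀
    change x e₀ + ε * d e₀ = x e₀ at hcf
    have hde : d e₀ ≠ 0 := sub_ne_zero.mpr he₀
    have : ε * d e₀ = 0 := by linarith
    rcases mul_eq_zero.mp this with h | h
    · exact absurd h (ne_of_gt hεpos)
    · exact hde h
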